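/- For every x > 0 the Langevin function L(x) = coth x − x⁻¹ satisfies L″(x) < 0. Consequently, for the Langevin magnetisation law with any parameter λ > 0 one has m₁″(1) = λ² L″(λ)/L(λ) < 0, and hence the coefficient ď₁ = (12 − α₀ m₁″(1))/6 is strictly positive for every α₀ > 0. -/

import Mathlib

open Filter Topology Set

section LangevinAux
open Real Set

/-- Ladder lemma: f(0)=0 and f'>0 on (0,∞) implies f>0 on (0,∞). -/
lemma pos_of_hasDerivAt_pos {f f' : ℝ → ℝ} (hd : ∀ x, HasDerivAt f (f' x) x)
    (h0 : f 0 = 0) (hp : ∀ x, 0 < x → 0 < f' x) : ∀ x, 0 < x → 0 < f x := by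
  have hm : StrictMonoOn f (Ici 0) := by
    apply strictMonoOn_of_deriv_pos (convex_Ici 0)
      (fun x _ => (hd x).continuousAt.continuousWithinAt)
    intro x hx
    rw [interior_Ici] at hx
    rw [(hd x).deriv]
    exact hp x hx
  intro x hx
  have := hm (self_mem_Ici) (mem_Ici.2 hx.le) hx
  rwa [h0] at this

lemma hasDerivAt_sinh3 (x : ℝ) :
    HasDerivAt (fun x => Real.sinh (3 * x)) (3 * Real.cosh (3 * x)) x := by
  have := (Real.hasDerivAt_sinh (3*x)).comp x ((hasDerivAt_id x).const_mul 3)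
  simpa [Function.comp_def, mul_comm] using this

lemma hasDerivAt_cosh3 (x : ℝ) :
    HasDerivAt (fun x => Real.cosh (3 * x)) (3 * Real.sinh (3 * x)) x := by
  have := (Real.hasDerivAt_cosh (3*x)).comp x ((hasDerivAt_id x).const_mul 3)
  simpa [Function.comp_def, mul_comm] using this

lemma cosh_quad (x : ℝ) (hx : 0 < x) : 1 + x^2/2 < Real.cosh x := by
  have := pos_of_hasDerivAt_pos (f := fun x => Real.cosh x - 1 - x^2/2)
    (f' := fun x => Real.sinh x - x)
    (fun x => by
      exact (((Real.hasDerivAt_cosh x).sub (hasDerivAt_const x 1)).sub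
        (((hasDerivAt_pow 2 x)).div_const 2)).congr_deriv (by simp))
    (by simp) (fun x hx => by simpa [sub_pos] using (Real.self_lt_sinh_iff).2 hx) x hx
  linarith

lemma hgd0 (x : ℝ) :
    HasDerivAt (fun x => 1*Real.sinh (3*x) - 3*Real.sinh x - 4*x^3*Real.cosh x)
      (3*Real.cosh (3*x) - 3*Real.cosh x - 12*x^2*Real.cosh x - 4*x^3*Real.sinh x) x := by
  have h0 := (hasDerivAt_sinh3 x).const_mul (1:ℝ)
  have h1 := (Real.hasDerivAt_sinh x).const_mul (3:ℝ)
  have h2 := ((hasDerivAt_pow 3 x).const_mul (4:ℝ)).mul (Real.hasDerivAt_cosh x)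
  exact ((h0.sub h1).sub h2).congr_deriv (by ring)

lemma hgd1 (x : ℝ) :
    HasDerivAt (fun x => 3*Real.cosh (3*x) - 3*Real.cosh x - 12*x^2*Real.cosh x - 4*x^3*Real.sinh x)
      (9*Real.sinh (3*x) - 3*Real.sinh x - 24*x^1*Real.cosh x - 24*x^2*Real.sinh x - 4*x^3*Real.cosh x) x := by
  have h0 := (hasDerivAt_cosh3 x).const_mul (3:ℝ)
  have h1 := (Real.hasDerivAt_cosh x).const_mul (3:ℝ)
  have h2 := ((hasDerivAt_pow 2 x).const_mul (12:ℝ)).mul (Real.hasDerivAt_cosh x)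
  have h3 := ((hasDerivAt_pow 3 x).const_mul (4:ℝ)).mul (Real.hasDerivAt_sinh x)
  exact (((h0.sub h1).sub h2).sub h3).congr_deriv (by ring)

lemma hgd2 (x : ℝ) :
    HasDerivAt (fun x => 9*Real.sinh (3*x) - 3*Real.sinh x - 24*x^1*Real.cosh x - 24*x^2*Real.sinh x - 4*x^3*Real.cosh x)
      (27*Real.cosh (3*x) - 27*Real.cosh x - 72*x^1*Real.sinh x - 36*x^2*Real.cosh x - 4*x^3*Real.sinh x) x := by
  have h0 := (hasDerivAt_sinh3 x).const_mul (9:ℝ)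
  have h1 := (Real.hasDerivAt_sinh x).const_mul (3:ℝ)
  have h2 := ((hasDerivAt_pow 1 x).const_mul (24:ℝ)).mul (Real.hasDerivAt_cosh x)
  have h3 := ((hasDerivAt_pow 2 x).const_mul (24:ℝ)).mul (Real.hasDerivAt_sinh x)
  have h4 := ((hasDerivAt_pow 3 x).const_mul (4:ℝ)).mul (Real.hasDerivAt_cosh x)
  exact ((((h0.sub h1).sub h2).sub h3).sub h4).congr_deriv (by ring)

lemma hgd3 (x : ℝ) :
    HasDerivAt (fun x => 27*Real.cosh (3*x) - 27*Real.cosh x - 72*x^1*Real.sinh x - 36*x^2*Real.cosh x - 4*x^3*Real.sinh x)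
      (81*Real.sinh (3*x) - 99*Real.sinh x - 144*x^1*Real.cosh x - 48*x^2*Real.sinh x - 4*x^3*Real.cosh x) x := by
  have h0 := (hasDerivAt_cosh3 x).const_mul (27:ℝ)
  have h1 := (Real.hasDerivAt_cosh x).const_mul (27:ℝ)
  have h2 := ((hasDerivAt_pow 1 x).const_mul (72:ℝ)).mul (Real.hasDerivAt_sinh x)
  have h3 := ((hasDerivAt_pow 2 x).const_mul (36:ℝ)).mul (Real.hasDerivAt_cosh x)
  have h4 := ((hasDerivAt_pow 3 x).const_mul (4:ℝ)).mul (Real.hasDerivAt_sinh x)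
  exact ((((h0.sub h1).sub h2).sub h3).sub h4).congr_deriv (by ring)

lemma hgd4 (x : ℝ) :
    HasDerivAt (fun x => 81*Real.sinh (3*x) - 99*Real.sinh x - 144*x^1*Real.cosh x - 48*x^2*Real.sinh x - 4*x^3*Real.cosh x)
      (243*Real.cosh (3*x) - 243*Real.cosh x - 240*x^1*Real.sinh x - 60*x^2*Real.cosh x - 4*x^3*Real.sinh x) x := by
  have h0 := (hasDerivAt_sinh3 x).const_mul (81:ℝ)
  have h1 := (Real.hasDerivAt_sinh x).const_mul (99:ℝ)
  have h2 := ((hasDerivAt_pow 1 x).const_mul (144:ℝ)).mul (Real.hasDerivAt_cosh x)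
  have h3 := ((hasDerivAt_pow 2 x).const_mul (48:ℝ)).mul (Real.hasDerivAt_sinh x)
  have h4 := ((hasDerivAt_pow 3 x).const_mul (4:ℝ)).mul (Real.hasDerivAt_cosh x)
  exact ((((h0.sub h1).sub h2).sub h3).sub h4).congr_deriv (by ring)

lemma hgd5 (x : ℝ) :
    HasDerivAt (fun x => 243*Real.cosh (3*x) - 243*Real.cosh x - 240*x^1*Real.sinh x - 60*x^2*Real.cosh x - 4*x^3*Real.sinh x)
      (729*Real.sinh (3*x) - 483*Real.sinh x - 360*x^1*Real.cosh x - 72*x^2*Real.sinh x - 4*x^3*Real.cosh x) x := by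
  have h0 := (hasDerivAt_cosh3 x).const_mul (243:ℝ)
  have h1 := (Real.hasDerivAt_cosh x).const_mul (243:ℝ)
  have h2 := ((hasDerivAt_pow 1 x).const_mul (240:ℝ)).mul (Real.hasDerivAt_sinh x)
  have h3 := ((hasDerivAt_pow 2 x).const_mul (60:ℝ)).mul (Real.hasDerivAt_cosh x)
  have h4 := ((hasDerivAt_pow 3 x).const_mul (4:ℝ)).mul (Real.hasDerivAt_sinh x)
  exact ((((h0.sub h1).sub h2).sub h3).sub h4).congr_deriv (by ring)

lemma hgd6 (x : ℝ) :
    HasDerivAt (fun x => 729*Real.sinh (3*x) - 483*Real.sinh x - 360*x^1*Real.cosh x - 72*x^2*Real.sinh x - 4*x^3*Real.cosh x)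
      (2187*Real.cosh (3*x) - 843*Real.cosh x - 504*x^1*Real.sinh x - 84*x^2*Real.cosh x - 4*x^3*Real.sinh x) x := by
  have h0 := (hasDerivAt_sinh3 x).const_mul (729:ℝ)
  have h1 := (Real.hasDerivAt_sinh x).const_mul (483:ℝ)
  have h2 := ((hasDerivAt_pow 1 x).const_mul (360:ℝ)).mul (Real.hasDerivAt_cosh x)
  have h3 := ((hasDerivAt_pow 2 x).const_mul (72:ℝ)).mul (Real.hasDerivAt_sinh x)
  have h4 := ((hasDerivAt_pow 3 x).const_mul (4:ℝ)).mul (Real.hasDerivAt_cosh x)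
  exact ((((h0.sub h1).sub h2).sub h3).sub h4).congr_deriv (by ring)

lemma g7_pos : ∀ x : ℝ, 0 < x →
    0 < 2187*Real.cosh (3*x) - 843*Real.cosh x - 504*x^1*Real.sinh x - 84*x^2*Real.cosh x - 4*x^3*Real.sinh x := by
  intro x hx
  have h3 := Real.cosh_three_mul x
  have hq := cosh_quad x hx
  have hc := Real.cosh_pos x
  have hs : Real.sinh x < Real.cosh x := Real.sinh_lt_cosh x
  have key : (7404:ℝ) + 504*x + 84*x^2 + 4*x^3 < 8748 * Real.cosh x^2 := by
    nlinarith [sq_nonneg (2*x - 1), sq_nonneg x, sq_nonneg (x - 1), mul_pos hx hx, hq, hx]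
  nlinarith [mul_lt_mul_of_pos_right key hc, h3, hs, hc,
    mul_lt_mul_of_pos_left hs (by positivity : (0:ℝ) < 504*x^1),
    mul_lt_mul_of_pos_left hs (by positivity : (0:ℝ) < 4*x^3),
    mul_lt_mul_of_pos_left hs (by positivity : (0:ℝ) < 84*x^2)]

/-- Lazarević: sinh³ x > x³ cosh x for x > 0. -/
lemma lazarevic {x : ℝ} (hx : 0 < x) : x^3 * Real.cosh x < Real.sinh x ^ 3 := by
  have p6 := pos_of_hasDerivAt_pos hgd6 (by norm_num) g7_pos
  have p5 := pos_of_hasDerivAt_pos hgd5 (by norm_num) p6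
  have p4 := pos_of_hasDerivAt_pos hgd4 (by norm_num) p5
  have p3 := pos_of_hasDerivAt_pos hgd3 (by norm_num) p4
  have p2 := pos_of_hasDerivAt_pos hgd2 (by norm_num) p3
  have p1 := pos_of_hasDerivAt_pos hgd1 (by norm_num) p2
  have p0 := pos_of_hasDerivAt_pos hgd0 (by norm_num) p1
  have h := p0 x hx
  have h3 := Real.sinh_three_mul x
  nlinarith [h, h3]

end LangevinAux

noncomputable section

/-- The Langevin function `L(x) = coth x − x⁻¹`. -/
def langevinL (x : ℝ) : ℝ := Real.cosh x / Real.sinh x - x⁻¹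

/-- The Langevin magnetisation law with parameter `λ > 0`:
`m₁(s) = L(λs)/L(λ)`. -/
def langevinLaw (lam s : ℝ) : ℝ := langevinL (lam * s) / langevinL lam

/-- First derivative of the Langevin function. -/
def langevinD1 (x : ℝ) : ℝ := (x^2)⁻¹ - ((Real.sinh x)^2)⁻¹

/-- Second derivative of the Langevin function. -/
def langevinD2 (x : ℝ) : ℝ := 2*Real.cosh x/(Real.sinh x)^3 - 2/x^3

lemma hasDerivAt_langevinL {x : ℝ} (hx : x ≠ 0) :
    HasDerivAt langevinL (langevinD1 x) x := by
  have hs : Real.sinh x ≠ 0 := Real.sinh_ne_zero.2 hx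
  have h1 := (Real.hasDerivAt_cosh x).div (Real.hasDerivAt_sinh x) hs
  have h2 : HasDerivAt (fun x : ℝ => x⁻¹) (-(x^2)⁻¹) x := hasDerivAt_inv hx
  have h := h1.sub h2
  have id1 : Real.cosh x ^ 2 - Real.sinh x ^ 2 = 1 := Real.cosh_sq_sub_sinh_sq x
  refine h.congr_deriv ?_
  unfold langevinD1
  field_simp
  linear_combination (-x^2) * id1

lemma hasDerivAt_langevinD1 {x : ℝ} (hx : x ≠ 0) :
    HasDerivAt langevinD1 (langevinD2 x) x := by
  have hs : Real.sinh x ≠ 0 := Real.sinh_ne_zero.2 hx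
  have h1 := (hasDerivAt_pow 2 x).inv (pow_ne_zero 2 hx)
  have h2 := ((Real.hasDerivAt_sinh x).pow 2).inv (pow_ne_zero 2 hs)
  have h := h1.sub h2
  refine h.congr_deriv ?_
  unfold langevinD2
  field_simp
  simp only [Pi.pow_apply]
  ring

lemma deriv_langevinL {x : ℝ} (hx : x ≠ 0) : deriv langevinL x = langevinD1 x :=
  (hasDerivAt_langevinL hx).deriv

lemma deriv2_langevinL {x : ℝ} (hx : x ≠ 0) :
    deriv (deriv langevinL) x = langevinD2 x := by
  have he : deriv langevinL =ᶠ[nhds x] langevinD1 := by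
    filter_upwards [eventually_ne_nhds hx] with y hy
    exact deriv_langevinL hy
  rw [he.deriv_eq]
  exact (hasDerivAt_langevinD1 hx).deriv

lemma langevinD2_neg {x : ℝ} (hx : 0 < x) : langevinD2 x < 0 := by
  have hs : 0 < Real.sinh x := Real.sinh_pos_iff.2 hx
  have hlaz := lazarevic hx
  have : 2*Real.cosh x/(Real.sinh x)^3 < 2/x^3 := by
    rw [div_lt_div_iff₀ (by positivity) (by positivity)]
    nlinarith [hlaz]
  unfold langevinD2
  linarith

lemma langevinL_pos {x : ℝ} (hx : 0 < x) : 0 < langevinL x := by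
  have hs : 0 < Real.sinh x := Real.sinh_pos_iff.2 hx
  have key : ∀ y : ℝ, 0 < y → 0 < y * Real.cosh y - Real.sinh y := by
    apply pos_of_hasDerivAt_pos (f' := fun y => y * Real.sinh y)
    · intro y
      have h := ((hasDerivAt_id y).mul (Real.hasDerivAt_cosh y)).sub (Real.hasDerivAt_sinh y)
      refine h.congr_deriv ?_
      simp [id]
    · norm_num
    · intro y hy
      exact mul_pos hy (Real.sinh_pos_iff.2 hy)
  have h := key x hx
  unfold langevinL
  rw [sub_pos, inv_eq_one_div, div_lt_div_iff₀ hx hs]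
  nlinarith [h]

lemma hasDerivAt_law {lam : ℝ} (hlam : 0 < lam) {s : ℝ} (hs : 0 < s) :
    HasDerivAt (langevinLaw lam)
      (lam * langevinD1 (lam * s) / langevinL lam) s := by
  have hne : lam * s ≠ 0 := by positivity
  have h := (hasDerivAt_langevinL hne).comp s ((hasDerivAt_id s).const_mul lam)
  have h2 := h.div_const (langevinL lam)
  have heq : (fun y => (langevinL ∘ fun y => lam * y) y / langevinL lam) = langevinLaw lam := rfl
  rw [heq] at h2
  refine h2.congr_deriv ?_
  simp [id]
  ring

lemma iteratedDeriv_two_law {lam : ℝ} (hlam : 0 < lam) :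
    iteratedDeriv 2 (langevinLaw lam) 1 = lam ^ 2 * langevinD2 lam / langevinL lam := by
  rw [iteratedDeriv_succ, iteratedDeriv_one]
  have he : deriv (langevinLaw lam)
      =ᶠ[nhds 1] (fun s => lam * langevinD1 (lam * s) / langevinL lam) := by
    filter_upwards [eventually_gt_nhds (by norm_num : (0:ℝ) < 1)] with s hsp
    exact (hasDerivAt_law hlam hsp).deriv
  rw [he.deriv_eq]
  have hne : lam * 1 ≠ 0 := by positivity
  have h := (hasDerivAt_langevinD1 hne).comp 1 ((hasDerivAt_id 1).const_mul lam)
  have h2 := (h.const_mul lam).div_const (langevinL lam)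
  have heq : (fun y => lam * (langevinD1 ∘ fun y => lam * y) y / langevinL lam)
      = fun s => lam * langevinD1 (lam * s) / langevinL lam := rfl
  rw [heq] at h2
  rw [h2.deriv]
  simp [id]
  ring


/-- The Langevin function is strictly concave on `(0, ∞)`: `L″(x) < 0` for all
`x > 0`. Consequently, for the Langevin magnetisation law with any parameter
`λ > 0` one has `m₁″(1) = λ² L″(λ)/L(λ) < 0`, and hence the coefficient
`ď₁ = (12 − α₀ m₁″(1))/6` is strictly positive for every `α₀ > 0`. -/
theorem langevin_second_derivative_negative :
    (∀ x : ℝ, 0 < x → deriv (deriv langevinL) x < 0) ∧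
    ∀ lam : ℝ, 0 < lam →
      iteratedDeriv 2 (langevinLaw lam) 1
          = lam ^ 2 * deriv (deriv langevinL) lam / langevinL lam ∧
      iteratedDeriv 2 (langevinLaw lam) 1 < 0 ∧
      ∀ α₀ : ℝ, 0 < α₀ →
        0 < (12 - α₀ * iteratedDeriv 2 (langevinLaw lam) 1) / 6 := by
  constructor
  · intro x hx
    rw [deriv2_langevinL (ne_of_gt hx)]
    exact langevinD2_neg hx
  · intro lam hlam
    have hc := langevinL_pos hlam
    have hD2 := langevinD2_neg hlam
    have key := iteratedDeriv_two_law hlam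
    have hL2 : deriv (deriv langevinL) lam = langevinD2 lam := deriv2_langevinL hlam.ne'
    have hneg : iteratedDeriv 2 (langevinLaw lam) 1 < 0 := by
      rw [key]
      apply div_neg_of_neg_of_pos _ hc
      exact mul_neg_of_pos_of_neg (pow_pos hlam 2) hD2
    refine ⟨by rw [key, hL2], hneg, fun α₀ hα => ?_⟩
    nlinarith [mul_pos hα (neg_pos.2 hneg)]
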